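/- An element y ∈ A satisfies y·M_{n,s} = 0 for every 1 ≤ s ≤ n if and only if y ∈ N_n, the F_p[x_1,…,x_n]-submodule of A spanned by a_1 a_2 ⋯ a_n. -/

import Mathlib

set_option maxHeartbeats 1000000
set_option synthInstance.maxHeartbeats 400000

open scoped BigOperators

noncomputable section

/-- The polynomial part `F_p[x_1,…,x_m]`. -/
abbrev Rp (p m : ℕ) := MvPolynomial (Fin m) (ZMod p)

/-- The model `A = F_p[x_1,…,x_m] ⊗ Λ(a_1,…,a_m)` of the mod-`p` cohomology ring of an
elementary abelian `p`-group of rank `m`, realized as the exterior algebra over the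
polynomial ring `Rp p m` on the free module of rank `m`. -/
abbrev Ap (p m : ℕ) := ExteriorAlgebra (Rp p m) (Fin m → Rp p m)

/-- The degree-one exterior generators `a_i`. -/
def aa (p m : ℕ) (i : Fin m) : Ap p m := ExteriorAlgebra.ι (Rp p m) (Pi.single i 1)

/-- The degree-two polynomial generators `x_i`. -/
def xx (p m : ℕ) (i : Fin m) : Ap p m := algebraMap (Rp p m) (Ap p m) (MvPolynomial.X i)

/-- The ordered product `a_{i_1} ⋯ a_{i_r}` over a subset `S = {i_1 < ⋯ < i_r}`. -/
def aProd (p m : ℕ) (S : Finset (Fin m)) : Ap p m := ((S.sort (· ≤ ·)).map (aa p m)).prod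

/-- `N_r = F_p[x_1,…,x_m] ⊗ Λ^r`, the `Rp p m`-submodule of `Ap p m` spanned by the products
`a_{i_1} ⋯ a_{i_r}` with `i_1 < ⋯ < i_r`. -/
def Nsub (p m : ℕ) (r : ℕ) : Submodule (Rp p m) (Ap p m) :=
  Submodule.span (Rp p m) {z | ∃ S : Finset (Fin m), S.card = r ∧ z = aProd p m S}

/-- `a_φ = Σ_i φ_i a_i` for `φ ∈ F_p^m`. -/
def aphi (p m : ℕ) (φ : Fin m → ZMod p) : Ap p m :=
  ∑ i : Fin m, (MvPolynomial.C (φ i) : Rp p m) • aa p m i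

/-- `x_φ = Σ_i φ_i x_i` for `φ ∈ F_p^m`. -/
def xphi (p m : ℕ) (φ : Fin m → ZMod p) : Ap p m :=
  ∑ i : Fin m, (MvPolynomial.C (φ i) : Rp p m) • xx p m i

/-- The essential ideal `Ess(A) = ⋂_{φ ≠ 0} (a_φ, x_φ)`, the intersection over all nonzero
`φ ∈ F_p^m` of the two-sided ideals of `A` generated by `a_φ` and `x_φ`. -/
def Ess (p m : ℕ) : Set (Ap p m) :=
  ⋂ φ ∈ {φ : Fin m → ZMod p | φ ≠ 0},
    (TwoSidedIdeal.span {aphi p m φ, xphi p m φ} : Set (Ap p m))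

/-- The `m × m` Moore matrix with entries `C_{s,i} = x_i^{p^{s-1}}` (zero-based: row `s`
has entries `x_i^{p^s}`). -/
def moore (p m : ℕ) : Matrix (Fin m) (Fin m) (Rp p m) :=
  Matrix.of fun s i => (MvPolynomial.X i) ^ (p ^ (s : ℕ))

/-- `L_m = det C`, the Moore determinant. -/
def Ldet (p m : ℕ) : Rp p m := (moore p m).det

/-- `γ_{s,i}`: the determinant of the minor of the Moore matrix obtained by deleting
row `s` and column `i` (here the rank is `n+1`). -/
def gam (p n : ℕ) (s i : Fin (n + 1)) : Rp p (n + 1) :=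
  ((moore p (n + 1)).submatrix s.succAbove i.succAbove).det

/-- The Mùi invariant `M_{n,s} = Σ_i (-1)^{i+1} γ_{s,i} a_i` (zero-based sign `(-1)^i`). -/
def Mui (p n : ℕ) (s : Fin (n + 1)) : Ap p (n + 1) :=
  ∑ i : Fin (n + 1), (((-1) ^ (i : ℕ) * gam p n s i : Rp p (n + 1))) • aa p (n + 1) i

namespace MuiHelp

open ExteriorAlgebra

variable (p m : ℕ)

/-- Product of the exterior generators over a list of indices. -/
def Plist (l : List (Fin m)) : Ap p m := (l.map (aa p m)).prod

@[simp] lemma Plist_nil : Plist p m [] = 1 := rfl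

@[simp] lemma Plist_cons (i : Fin m) (l : List (Fin m)) :
    Plist p m (i :: l) = aa p m i * Plist p m l := by
  simp [Plist]

lemma Plist_append (l₁ l₂ : List (Fin m)) :
    Plist p m (l₁ ++ l₂) = Plist p m l₁ * Plist p m l₂ := by
  simp [Plist]

lemma Plist_singleton (i : Fin m) : Plist p m [i] = aa p m i := by
  simp

lemma aProd_eq_Plist (S : Finset (Fin m)) : aProd p m S = Plist p m (S.sort (· ≤ ·)) := rfl

lemma aa_anticomm (i j : Fin m) : aa p m i * aa p m j = -(aa p m j * aa p m i) :=
  eq_neg_of_add_eq_zero_left (ExteriorAlgebra.ι_add_mul_swap _ _)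

@[simp] lemma aa_sq (i : Fin m) : aa p m i * aa p m i = 0 :=
  ExteriorAlgebra.ι_sq_zero _

lemma Plist_mul_aa (l : List (Fin m)) (j : Fin m) :
    Plist p m l * aa p m j = ((-1 : Rp p m) ^ l.length) • (aa p m j * Plist p m l) := by
  induction l with
  | nil => simp
  | cons x l ih =>
    rw [Plist_cons, List.length_cons, mul_assoc, ih, mul_smul_comm, ← mul_assoc,
      aa_anticomm p m x j, pow_succ]
    rw [neg_mul, smul_neg, mul_assoc, mul_neg_one, neg_smul]

lemma aa_mul_Plist_of_mem {l : List (Fin m)} {j : Fin m} (h : j ∈ l) :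
    aa p m j * Plist p m l = 0 := by
  induction l with
  | nil => simp at h
  | cons x l ih =>
    rcases List.mem_cons.mp h with h | h
    · subst h; rw [Plist_cons, ← mul_assoc, aa_sq, zero_mul]
    · rw [Plist_cons, ← mul_assoc, aa_anticomm p m j x, neg_mul, mul_assoc, ih h,
        mul_zero, neg_zero]

lemma Plist_mul_aa_of_mem {l : List (Fin m)} {j : Fin m} (h : j ∈ l) :
    Plist p m l * aa p m j = 0 := by
  rw [Plist_mul_aa, aa_mul_Plist_of_mem p m h, smul_zero]

/-- A sign in `Rp p m`. -/
def IsSign (ε : Rp p m) : Prop := ε = 1 ∨ ε = -1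

lemma IsSign.mul_sign {ε₁ ε₂ : Rp p m} (h₁ : IsSign p m ε₁) (h₂ : IsSign p m ε₂) :
    IsSign p m (ε₁ * ε₂) := by
  rcases h₁ with h | h <;> rcases h₂ with h' | h' <;> subst h <;> subst h' <;>
    simp [IsSign]

lemma Plist_perm {l l' : List (Fin m)} (h : l.Perm l') :
    ∃ ε : Rp p m, IsSign p m ε ∧ Plist p m l = ε • Plist p m l' := by
  induction h with
  | nil => exact ⟨1, Or.inl rfl, (one_smul _ _).symm⟩
  | cons x h ih =>
    obtain ⟨ε, hε, he⟩ := ih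
    exact ⟨ε, hε, by rw [Plist_cons, he, mul_smul_comm, Plist_cons]⟩
  | swap x y l =>
    refine ⟨-1, Or.inr rfl, ?_⟩
    rw [Plist_cons, Plist_cons, Plist_cons, Plist_cons, ← mul_assoc, ← mul_assoc,
      aa_anticomm p m y x, neg_mul, neg_one_smul]
  | trans h₁ h₂ ih₁ ih₂ =>
    obtain ⟨ε₁, hε₁, he₁⟩ := ih₁
    obtain ⟨ε₂, hε₂, he₂⟩ := ih₂
    exact ⟨ε₁ * ε₂, hε₁.mul_sign p m hε₂, by rw [he₁, he₂, smul_smul]⟩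

lemma sort_insert_perm {i : Fin m} {S : Finset (Fin m)} (h : i ∉ S) :
    ((insert i S).sort (· ≤ ·)).Perm (i :: S.sort (· ≤ ·)) :=
  (Finset.sort_perm_toList _ _).trans
    ((Finset.toList_insert h).trans ((Finset.sort_perm_toList _ _).symm.cons i))

lemma aProd_mul_aa_of_not_mem {S : Finset (Fin m)} {j : Fin m} (h : j ∉ S) :
    ∃ ε : Rp p m, IsSign p m ε ∧
      aProd p m S * aa p m j = ε • aProd p m (insert j S) := by
  have hperm : (S.sort (· ≤ ·) ++ [j]).Perm ((insert j S).sort (· ≤ ·)) :=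
    (List.perm_append_singleton _ _).trans (sort_insert_perm m h).symm
  obtain ⟨ε, hε, he⟩ := Plist_perm p m hperm
  refine ⟨ε, hε, ?_⟩
  rw [aProd_eq_Plist, aProd_eq_Plist, ← he, Plist_append, Plist_singleton]

lemma aProd_mul_aa_of_mem {S : Finset (Fin m)} {j : Fin m} (h : j ∈ S) :
    aProd p m S * aa p m j = 0 :=
  Plist_mul_aa_of_mem p m ((Finset.mem_sort _).mpr h)

@[simp] lemma aProd_empty : aProd p m ∅ = 1 := by
  simp [aProd, Finset.sort_empty]

/-- The span of all the `aProd S`. -/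
def NN : Submodule (Rp p m) (Ap p m) := Submodule.span (Rp p m) (Set.range (aProd p m))

lemma aa_mul_mem (i : Fin m) {z : Ap p m} (hz : z ∈ NN p m) : aa p m i * z ∈ NN p m := by
  induction hz using Submodule.span_induction with
  | mem x hx =>
    obtain ⟨S, rfl⟩ := hx
    by_cases hiS : i ∈ S
    · rw [aProd_eq_Plist, aa_mul_Plist_of_mem p m ((Finset.mem_sort _).mpr hiS)]
      exact Submodule.zero_mem _
    · obtain ⟨ε, hε, he⟩ := Plist_perm p m (sort_insert_perm m hiS).symm
      have : aa p m i * aProd p m S = ε • aProd p m (insert i S) := by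
        rw [aProd_eq_Plist, aProd_eq_Plist, ← Plist_cons]
        rw [← he]
      rw [this]
      exact Submodule.smul_mem _ _ (Submodule.subset_span ⟨_, rfl⟩)
  | zero => rw [mul_zero]; exact Submodule.zero_mem _
  | add x y hx hy ihx ihy =>
    rw [mul_add]; exact Submodule.add_mem _ ihx ihy
  | smul a x hx ihx =>
    rw [mul_smul_comm]; exact Submodule.smul_mem _ _ ihx

lemma Plist_mem (l : List (Fin m)) : Plist p m l ∈ NN p m := by
  induction l with
  | nil => exact Submodule.subset_span ⟨∅, by simp [aProd_eq_Plist, Finset.sort_empty]⟩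
  | cons x l ih => rw [Plist_cons]; exact aa_mul_mem p m x ih

lemma mul_mem_NN {a b : Ap p m} (ha : a ∈ NN p m) (hb : b ∈ NN p m) :
    a * b ∈ NN p m := by
  induction ha using Submodule.span_induction with
  | mem x hx =>
    obtain ⟨S, rfl⟩ := hx
    induction hb using Submodule.span_induction with
    | mem z hz =>
      obtain ⟨T, rfl⟩ := hz
      rw [aProd_eq_Plist, aProd_eq_Plist, ← Plist_append]
      exact Plist_mem p m _
    | zero => rw [mul_zero]; exact Submodule.zero_mem _
    | add x y hx hy ihx ihy => rw [mul_add]; exact Submodule.add_mem _ ihx ihy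
    | smul a x hx ihx => rw [mul_smul_comm]; exact Submodule.smul_mem _ _ ihx
  | zero => rw [zero_mul]; exact Submodule.zero_mem _
  | add x y hx hy ihx ihy => rw [add_mul]; exact Submodule.add_mem _ ihx ihy
  | smul a x hx ihx => rw [smul_mul_assoc]; exact Submodule.smul_mem _ _ ihx

lemma span_aProd_top : ⊤ ≤ NN p m := by
  intro x hx
  clear hx
  induction x using ExteriorAlgebra.induction with
  | algebraMap r =>
    rw [Algebra.algebraMap_eq_smul_one]
    exact Submodule.smul_mem _ _ (Submodule.subset_span ⟨∅, aProd_empty p m⟩)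
  | ι v =>
    have hv : v = ∑ i, Pi.single i (v i) := (Finset.univ_sum_single v).symm
    rw [hv, map_sum]
    refine Submodule.sum_mem _ fun i _ => ?_
    have : (Pi.single i (v i) : Fin m → Rp p m)
        = v i • (Pi.single i (1 : Rp p m) : Fin m → Rp p m) := by
      rw [← Pi.single_smul, smul_eq_mul, mul_one]
    rw [this, map_smul]
    refine Submodule.smul_mem _ _ (Submodule.subset_span ⟨{i}, ?_⟩)
    rw [aProd_eq_Plist, Finset.sort_singleton, Plist_singleton]
    rfl
  | mul a b ha hb => exact mul_mem_NN p m ha hb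
  | add a b ha hb => exact Submodule.add_mem _ ha hb

section Coeff

variable [NeZero m]

/-- Index function picking the elements of `S` in order, with junk padding. -/
def padIdx (S : Finset (Fin m)) (k : ℕ) : Fin k → Fin m :=
  fun l => (S.sort (· ≤ ·)).getD l 0

/-- The determinant-of-selected-coordinates alternating map. -/
def coeffAlt (S : Finset (Fin m)) (k : ℕ) :
    (Fin m → Rp p m) [⋀^Fin k]→ₗ[Rp p m] Rp p m :=
  (Matrix.detRowAlternating :
      (Fin k → Rp p m) [⋀^Fin k]→ₗ[Rp p m] Rp p m).compLinearMap
    (LinearMap.funLeft (Rp p m) (Rp p m) (padIdx m S k))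

lemma coeffAlt_apply (S : Finset (Fin m)) (k : ℕ) (v : Fin k → (Fin m → Rp p m)) :
    coeffAlt p m S k v = Matrix.det (Matrix.of fun a b => v a (padIdx m S k b)) := rfl

/-- The degree-selecting family of alternating maps. -/
def coeffF (S : Finset (Fin m)) (k : ℕ) :
    (Fin m → Rp p m) [⋀^Fin k]→ₗ[Rp p m] Rp p m :=
  if k = S.card then coeffAlt p m S k else 0

/-- The coefficient functional attached to `S`. -/
def coeffL (S : Finset (Fin m)) : Ap p m →ₗ[Rp p m] Rp p m :=
  ExteriorAlgebra.liftAlternating (coeffF p m S)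

lemma lift_Plist (f : ∀ k, (Fin m → Rp p m) [⋀^Fin k]→ₗ[Rp p m] Rp p m)
    (l : List (Fin m)) :
    ExteriorAlgebra.liftAlternating f (Plist p m l)
      = f l.length (fun k => Pi.single (l.get k) 1) := by
  induction l generalizing f with
  | nil =>
    rw [Plist_nil, ExteriorAlgebra.liftAlternating_one]
    exact congrArg (f 0) (Subsingleton.elim _ _)
  | cons a l ih =>
    rw [Plist_cons]
    rw [show aa p m a = ExteriorAlgebra.ι (Rp p m) (Pi.single a 1) from rfl,
      ExteriorAlgebra.liftAlternating_ι_mul, ih, AlternatingMap.curryLeft_apply_apply]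
    congr 1
    funext k
    refine Fin.cases ?_ (fun k' => ?_) k
    · simp
    · simp

lemma coeffL_aProd (S T : Finset (Fin m)) :
    coeffL p m S (aProd p m T) = if S = T then 1 else 0 := by
  rw [aProd_eq_Plist, coeffL, lift_Plist]
  by_cases hc : (T.sort (· ≤ ·)).length = S.card
  · rw [show coeffF p m S (T.sort (· ≤ ·)).length
        = coeffAlt p m S (T.sort (· ≤ ·)).length from if_pos hc]
    rw [coeffAlt_apply]
    by_cases hST : S = T
    · subst hST
      rw [if_pos rfl]
      refine (congrArg Matrix.det ?_).trans Matrix.det_one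
      ext a b
      simp only [Matrix.of_apply, Matrix.one_apply, padIdx]
      have hb : (b : ℕ) < (S.sort (· ≤ ·)).length := b.isLt
      rw [List.getD_eq_getElem _ _ hb, List.get_eq_getElem, Pi.single_apply]
      have hnd := Finset.sort_nodup S (· ≤ ·)
      by_cases hab : a = b
      · subst hab; simp
      · rw [if_neg, if_neg hab]
        intro hcon
        exact hab (Fin.ext (hnd.getElem_inj_iff.mp hcon.symm))
    · rw [if_neg hST]
      have hTS : ¬T ⊆ S := fun hsub => hST
        (Finset.eq_of_subset_of_card_le hsub (by rw [← hc]; simp)).symm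
      obtain ⟨t, htT, htS⟩ := Finset.not_subset.mp hTS
      have htT' : t ∈ T.sort (· ≤ ·) := (Finset.mem_sort _).mpr htT
      obtain ⟨a, ha, hta⟩ := List.mem_iff_getElem.mp htT'
      refine Matrix.det_eq_zero_of_row_eq_zero ⟨a, ha⟩ fun b => ?_
      simp only [Matrix.of_apply, padIdx]
      have hb : (b : ℕ) < (S.sort (· ≤ ·)).length := by
        have h1 : (b : ℕ) < S.card := hc ▸ b.isLt
        simpa using h1
      rw [List.getD_eq_getElem _ _ hb, List.get_eq_getElem, hta]
      refine Pi.single_eq_of_ne (fun hcon => htS ?_) _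
      have hmem : (S.sort (· ≤ ·))[(b : ℕ)] ∈ S.sort (· ≤ ·) := List.getElem_mem _
      rw [hcon] at hmem
      exact (Finset.mem_sort _).mp hmem
  · rw [show coeffF p m S (T.sort (· ≤ ·)).length = 0 from if_neg hc,
      AlternatingMap.zero_apply]
    rw [if_neg]
    intro hST
    subst hST
    exact hc (by simp)

lemma linearIndependent_aProd : LinearIndependent (Rp p m) (aProd p m) := by
  rw [linearIndependent_iff]
  intro l hl
  refine Finsupp.ext fun S => ?_
  have h0 := congrArg (coeffL p m S) hl
  rw [map_zero, Finsupp.linearCombination_apply, Finsupp.sum, map_sum] at h0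
  simp only [map_smul, coeffL_aProd, smul_eq_mul] at h0
  rw [Finset.sum_eq_single S (fun T _ hTS => by rw [if_neg (Ne.symm hTS), mul_zero])
    (fun hS => by rw [Finsupp.notMem_support_iff.mp hS, zero_mul])] at h0
  rw [if_pos rfl, mul_one] at h0
  rw [h0, Finsupp.coe_zero, Pi.zero_apply]

/-- The monomial basis of the exterior algebra. -/
def bA : Module.Basis (Finset (Fin m)) (Rp p m) (Ap p m) :=
  Module.Basis.mk (linearIndependent_aProd p m) (span_aProd_top p m)

@[simp] lemma bA_apply (S : Finset (Fin m)) : bA p m S = aProd p m S := by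
  unfold bA; exact congrFun (Module.Basis.coe_mk _ _) S

end Coeff

end MuiHelp

open MuiHelp

lemma Nsub_top_eq (p m : ℕ) :
    Nsub p m m = Submodule.span (Rp p m) {aProd p m Finset.univ} := by
  unfold Nsub
  congr 1
  ext z
  constructor
  · rintro ⟨S, hS, rfl⟩
    have : S = Finset.univ := by
      rw [← Finset.card_eq_iff_eq_univ]
      rw [hS, Fintype.card_fin]
    rw [this]
    rfl
  · rintro rfl
    exact ⟨Finset.univ, by simp, rfl⟩

section Moore

variable (p n : ℕ) [Fact p.Prime]

lemma cofactor (i j : Fin (n + 1)) :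
    ∑ s : Fin (n + 1),
        (-1 : Rp p (n + 1)) ^ ((s : ℕ) + (i : ℕ)) * moore p (n + 1) s j * gam p n s i
      = if i = j then Ldet p (n + 1) else 0 := by
  split_ifs with h
  · subst h
    exact (Matrix.det_succ_column (moore p (n + 1)) i).symm
  · set B := Matrix.updateCol (moore p (n + 1)) i (fun s => moore p (n + 1) s j) with hB
    have hdet : B.det = 0 := by
      refine Matrix.det_zero_of_column_eq h fun k => ?_
      rw [hB, Matrix.updateCol_self, Matrix.updateCol_ne (Ne.symm h)]
    have hexp := Matrix.det_succ_column B i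
    rw [hdet] at hexp
    have : ∀ s : Fin (n + 1),
        (-1 : Rp p (n + 1)) ^ ((s : ℕ) + (i : ℕ)) * B s i *
            (B.submatrix s.succAbove i.succAbove).det
          = (-1 : Rp p (n + 1)) ^ ((s : ℕ) + (i : ℕ)) * moore p (n + 1) s j * gam p n s i := by
      intro s
      have h1 : B s i = moore p (n + 1) s j := Matrix.updateCol_self
      have h2 : B.submatrix s.succAbove i.succAbove
          = (moore p (n + 1)).submatrix s.succAbove i.succAbove := by
        ext k l
        rw [Matrix.submatrix_apply, Matrix.submatrix_apply, hB,
          Matrix.updateCol_ne (Fin.succAbove_ne i l)]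
      rw [h1, h2, gam]
    rw [← Finset.sum_congr rfl fun s _ => this s]
    exact hexp.symm

lemma combo (j : Fin (n + 1)) :
    ∑ s : Fin (n + 1),
        ((-1 : Rp p (n + 1)) ^ (s : ℕ) * moore p (n + 1) s j) • Mui p n s
      = Ldet p (n + 1) • aa p (n + 1) j := by
  unfold Mui
  have step1 : ∀ s : Fin (n + 1),
      ((-1 : Rp p (n + 1)) ^ (s : ℕ) * moore p (n + 1) s j) •
          ∑ i : Fin (n + 1), ((-1 : Rp p (n + 1)) ^ (i : ℕ) * gam p n s i) • aa p (n + 1) i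
        = ∑ i : Fin (n + 1),
            ((-1 : Rp p (n + 1)) ^ ((s : ℕ) + (i : ℕ)) * moore p (n + 1) s j * gam p n s i) •
              aa p (n + 1) i := by
    intro s
    rw [Finset.smul_sum]
    refine Finset.sum_congr rfl fun i _ => ?_
    rw [smul_smul]
    congr 1
    rw [pow_add]
    ring
  rw [Finset.sum_congr rfl fun s _ => step1 s, Finset.sum_comm]
  have step2 : ∀ i : Fin (n + 1),
      ∑ s : Fin (n + 1),
          ((-1 : Rp p (n + 1)) ^ ((s : ℕ) + (i : ℕ)) * moore p (n + 1) s j * gam p n s i) •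
            aa p (n + 1) i
        = (if i = j then Ldet p (n + 1) else 0) • aa p (n + 1) i := by
    intro i
    rw [← Finset.sum_smul, cofactor p n i j]
  rw [Finset.sum_congr rfl fun i _ => step2 i]
  simp [ite_smul]

lemma sum_single_apply (c : Fin (n + 1) → ℕ) (i : Fin (n + 1)) :
    (∑ j, Finsupp.single j (c j)) i = c i := by
  rw [Finset.sum_apply']
  rw [Finset.sum_eq_single i (fun b _ hbi => Finsupp.single_eq_of_ne' hbi)
    (fun hi => absurd (Finset.mem_univ i) hi)]
  exact Finsupp.single_eq_same

lemma prod_X_pow_eq (e : Fin (n + 1) → ℕ) (s : Finset (Fin (n + 1))) :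
    ∏ i ∈ s, (MvPolynomial.X i : Rp p (n + 1)) ^ e i
      = MvPolynomial.monomial (∑ i ∈ s, Finsupp.single i (e i)) 1 := by
  classical
  induction s using Finset.induction_on with
  | empty => simp
  | insert x s hx ih =>
    rw [Finset.prod_insert hx, Finset.sum_insert hx, ih, MvPolynomial.X_pow_eq_monomial,
      MvPolynomial.monomial_mul, one_mul]

lemma Ldet_ne_zero : Ldet p (n + 1) ≠ 0 := by
  have hp : p.Prime := Fact.out
  set d : Fin (n + 1) →₀ ℕ := ∑ i, Finsupp.single i (p ^ (i : ℕ)) with hd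
  have hco : MvPolynomial.coeff d (Ldet p (n + 1)) = 1 := by
    rw [Ldet, Matrix.det_apply, MvPolynomial.coeff_sum]
    have hterm : ∀ σ : Equiv.Perm (Fin (n + 1)),
        MvPolynomial.coeff d
            (Equiv.Perm.sign σ • ∏ i, moore p (n + 1) (σ i) i)
          = if σ = 1 then 1 else 0 := by
      intro σ
      have hmoo : (∏ i, moore p (n + 1) (σ i) i)
          = MvPolynomial.monomial (∑ i, Finsupp.single i (p ^ ((σ i : Fin (n + 1)) : ℕ))) 1 := by
        rw [show (∏ i, moore p (n + 1) (σ i) i)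
          = ∏ i, (MvPolynomial.X i : Rp p (n + 1)) ^ (p ^ ((σ i : Fin (n + 1)) : ℕ)) from rfl]
        exact prod_X_pow_eq p n _ _
      by_cases hσ : σ = 1
      · subst hσ
        rw [if_pos rfl, Units.smul_def, MvPolynomial.coeff_smul, hmoo,
          MvPolynomial.coeff_monomial, if_pos (by rw [hd]; rfl), Equiv.Perm.sign_one]
        simp
      · have hne : (∑ i, Finsupp.single i (p ^ ((σ i : Fin (n + 1)) : ℕ))) ≠ d := by
          intro heq
          apply hσ
          apply Equiv.ext
          intro i
          have h1 := DFunLike.congr_fun heq i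
          rw [hd, sum_single_apply, sum_single_apply] at h1
          exact Fin.ext (Nat.pow_right_injective hp.two_le h1)
        rw [if_neg hσ, Units.smul_def, MvPolynomial.coeff_smul, hmoo,
          MvPolynomial.coeff_monomial, if_neg hne, smul_zero]
    rw [Finset.sum_congr rfl fun σ _ => hterm σ]
    rw [Finset.sum_ite_eq' Finset.univ (1 : Equiv.Perm (Fin (n + 1))) (fun _ => 1)]
    simp
  intro h0
  rw [h0, MvPolynomial.coeff_zero] at hco
  exact one_ne_zero hco.symm

end Moore

/-- An element `y ∈ A` satisfies `y·M_{n,s} = 0` for every `s` if and only if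
`y ∈ N_n`, the top exterior component (the rank is `n+1`). -/
theorem joint_annihilator_Mui (p n : ℕ) [Fact p.Prime] (hodd : Odd p)
    (y : Ap p (n + 1)) :
    (∀ s : Fin (n + 1), y * Mui p n s = 0) ↔ y ∈ Nsub p (n + 1) (n + 1) := by
  constructor
  · intro H
    have hz : ∀ j : Fin (n + 1), y * aa p (n + 1) j = 0 := by
      intro j
      have h1 : Ldet p (n + 1) • (y * aa p (n + 1) j) = 0 := by
        rw [← mul_smul_comm, ← combo p n j, Finset.mul_sum]
        refine Finset.sum_eq_zero fun s _ => ?_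
        rw [mul_smul_comm, H s, smul_zero]
      haveI : NoZeroSMulDivisors (Rp p (n + 1)) (Ap p (n + 1)) :=
        ⟨fun h => (bA p (n + 1)).smul_eq_zero.mp h⟩
      rcases smul_eq_zero.mp h1 with h | h
      · exact absurd h (Ldet_ne_zero p n)
      · exact h
    set c := (bA p (n + 1)).repr y with hcdef
    have hy : Finsupp.linearCombination (Rp p (n + 1)) (aProd p (n + 1)) c = y := by
      have h := (bA p (n + 1)).linearCombination_repr y
      rwa [show ⇑(bA p (n + 1)) = aProd p (n + 1) from funext (bA_apply p (n + 1))] at h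
    have hcS : ∀ S : Finset (Fin (n + 1)), S ≠ Finset.univ → c S = 0 := by
      intro S hS
      obtain ⟨j, hj⟩ : ∃ j, j ∉ S := by
        by_contra hcon
        push_neg at hcon
        exact hS (Finset.eq_univ_iff_forall.mpr hcon)
      have h0 : coeffL p (n + 1) (insert j S) (y * aa p (n + 1) j) = 0 := by
        rw [hz j, map_zero]
      rw [← hy, Finsupp.linearCombination_apply, Finsupp.sum, Finset.sum_mul, map_sum] at h0
      have hterm : ∀ T ∈ c.support, T ≠ S →
          coeffL p (n + 1) (insert j S) (c T • aProd p (n + 1) T * aa p (n + 1) j) = 0 := by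
        intro T _ hTS
        by_cases hjT : j ∈ T
        · rw [smul_mul_assoc, aProd_mul_aa_of_mem p (n + 1) hjT, smul_zero, map_zero]
        · obtain ⟨ε, hε, he⟩ := aProd_mul_aa_of_not_mem p (n + 1) hjT
          rw [smul_mul_assoc, he, map_smul, map_smul, coeffL_aProd]
          rw [if_neg, smul_zero, smul_zero]
          intro hins
          apply hTS
          have herase : (insert j S).erase j = (insert j T).erase j := by rw [hins]
          rwa [Finset.erase_insert hj, Finset.erase_insert hjT, eq_comm] at herase
      rw [Finset.sum_eq_single S hterm (fun hS' => by
        rw [Finsupp.notMem_support_iff.mp hS', zero_smul, zero_mul, map_zero])] at h0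
      obtain ⟨ε, hε, he⟩ := aProd_mul_aa_of_not_mem p (n + 1) hj
      rw [smul_mul_assoc, he, map_smul, map_smul, coeffL_aProd, if_pos rfl] at h0
      rcases hε with h | h <;> subst h <;>
        simpa [smul_eq_mul] using h0
    have hrepr : (bA p (n + 1)).repr y = Finsupp.single Finset.univ (c Finset.univ) := by
      refine Finsupp.ext fun T => ?_
      by_cases hT : T = Finset.univ
      · subst hT
        rw [Finsupp.single_eq_same, ← hcdef]
      · rw [Finsupp.single_eq_of_ne fun hcon => hT hcon, ← hcdef]
        exact hcS T hT
    have hy2 : y = c Finset.univ • aProd p (n + 1) Finset.univ := by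
      apply (bA p (n + 1)).repr.injective
      rw [hrepr, map_smul]
      rw [show aProd p (n + 1) Finset.univ = bA p (n + 1) Finset.univ from
        (bA_apply _ _ _).symm, Module.Basis.repr_self, Finsupp.smul_single, smul_eq_mul, mul_one]
    rw [hy2, Nsub_top_eq]
    exact Submodule.smul_mem _ _ (Submodule.subset_span (Set.mem_singleton _))
  · intro hy s
    rw [Nsub_top_eq] at hy
    induction hy using Submodule.span_induction with
    | mem z hz =>
      rw [Set.mem_singleton_iff] at hz
      subst hz
      unfold Mui
      rw [Finset.mul_sum]
      refine Finset.sum_eq_zero fun i _ => ?_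
      rw [mul_smul_comm, aProd_mul_aa_of_mem p (n + 1) (Finset.mem_univ i), smul_zero]
    | zero => rw [zero_mul]
    | add a b ha hb iha ihb => rw [add_mul, iha, ihb, add_zero]
    | smul r a ha iha => rw [smul_mul_assoc, iha, smul_zero]
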